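/- arXiv:2601.15564 — 4 statements merged into one kernel-verified Lean document; each statement's English description precedes it below -/
import Mathlib

section
/- Let f : [z, y] → ℝ be a positive monotone function with f' piecewise continuous, let c : ℕ → ℝ be an arithmetic function, g a differentiable function, and E a constant such that for all x, w with z ≤ x < w ≤ y we have ∑_{x ≤ n < w} c(n) ≤ g(w) − g(x) + E. Then ∑_{z ≤ n < y} c(n)·f(n) ≤ ∫_z^y f(t)·g'(t) dt + E·max(f(z), f(y)). -/
open Real Finset Topology Filter MeasureTheory intervalIntegral


lemma aux_filter_eq (x w : ℝ) :
    ((Finset.range ⌈w⌉₊).filter (fun n : ℕ => x ≤ (n:ℝ) ∧ (n:ℝ) < w)) = Finset.Ico ⌈x⌉₊ ⌈w⌉₊ := by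
  ext n
  simp only [Finset.mem_filter, Finset.mem_range, Finset.mem_Ico, Nat.ceil_le, Nat.lt_ceil]
  tauto

lemma aux_deriv_nonneg {a b : ℝ} {f : ℝ → ℝ} {d : ℝ} (hm : MonotoneOn f (Set.Icc a b))
    {t : ℝ} (ht : t ∈ Set.Ioo a b) (hd : HasDerivWithinAt f d (Set.Icc a b) t) : 0 ≤ d := by
  have hts : t ∉ Set.Ioo t b := fun h => lt_irrefl t h.1
  have h2 : HasDerivWithinAt f d (Set.Ioo t b) t :=
    hd.mono (fun u hu => ⟨ht.1.le.trans hu.1.le, hu.2.le⟩)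
  rw [hasDerivWithinAt_iff_tendsto_slope, Set.diff_singleton_eq_self hts] at h2
  have hne : (𝓝[Set.Ioo t b] t).NeBot := by
    rw [nhdsWithin_Ioo_eq_nhdsGT ht.2]; infer_instance
  refine ge_of_tendsto h2 ?_
  filter_upwards [self_mem_nhdsWithin] with u hu
  have := hm (Set.mem_Icc.mpr ⟨ht.1.le, ht.2.le⟩)
    (Set.mem_Icc.mpr ⟨ht.1.le.trans hu.1.le, hu.2.le⟩) hu.1.le
  rw [slope_def_field]
  exact div_nonneg (by linarith) (by linarith [hu.1])

lemma aux_pointwise (z y : ℝ) (c : ℕ → ℝ) (f' : ℝ → ℝ) {t : ℝ} (ht1 : z ≤ t) :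
    ∑ n ∈ Finset.Ico ⌈z⌉₊ ⌈y⌉₊, Set.indicator {x | x ≤ (n:ℝ)} (fun u => c n * f' u) t =
      (∑ n ∈ Finset.Ico ⌈t⌉₊ ⌈y⌉₊, c n) * f' t := by
  have hmt : ⌈z⌉₊ ≤ ⌈t⌉₊ := Nat.ceil_le_ceil ht1
  have step : ∀ n ∈ Finset.Ico ⌈z⌉₊ ⌈y⌉₊,
      Set.indicator {x | x ≤ (n:ℝ)} (fun u => c n * f' u) t =
        (if ⌈t⌉₊ ≤ n then c n else 0) * f' t := by
    intro n hn
    rw [Set.indicator_apply]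
    simp only [Set.mem_setOf_eq]
    by_cases h : t ≤ (n:ℝ)
    · rw [if_pos h, if_pos (Nat.ceil_le.mpr h)]
    · rw [if_neg h, if_neg (fun hc => h (Nat.ceil_le.mp hc)), zero_mul]
  rw [Finset.sum_congr rfl step, ← Finset.sum_mul, Finset.sum_ite, Finset.sum_const_zero,
    add_zero]
  congr 2
  ext k
  simp only [Finset.mem_filter, Finset.mem_Ico]
  omega

lemma aux_ind_integrable (z y : ℝ) (hzy : z < y) (f' : ℝ → ℝ) (c : ℕ → ℝ)
    (hf'c : ContinuousOn f' (Set.Icc z y)) (n : ℕ) :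
    IntervalIntegrable (Set.indicator {x | x ≤ (n:ℝ)} (fun u => c n * f' u)) volume z y := by
  rw [intervalIntegrable_iff_integrableOn_Ioc_of_le hzy.le]
  have h0 : IntegrableOn (fun u => c n * f' u) (Set.Icc z y) :=
    hf'c.integrableOn_Icc.const_mul (c n)
  exact (h0.mono_set Set.Ioc_subset_Icc_self).indicator measurableSet_Iic

lemma abel_integrable (z y : ℝ) (hzy : z < y) (f' : ℝ → ℝ) (c : ℕ → ℝ)
    (hf'c : ContinuousOn f' (Set.Icc z y)) :
    IntervalIntegrable (fun t => (∑ n ∈ Finset.Ico ⌈t⌉₊ ⌈y⌉₊, c n) * f' t) volume z y := by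
  rw [intervalIntegrable_iff_integrableOn_Ioc_of_le hzy.le]
  have hs : IntegrableOn (fun t => ∑ n ∈ Finset.Ico ⌈z⌉₊ ⌈y⌉₊,
      Set.indicator {x | x ≤ (n:ℝ)} (fun u => c n * f' u) t) (Set.Ioc z y) := by
    apply integrable_finset_sum
    intro n _
    have := aux_ind_integrable z y hzy f' c hf'c n
    rwa [intervalIntegrable_iff_integrableOn_Ioc_of_le hzy.le] at this
  exact hs.congr_fun (fun t ht => aux_pointwise z y c f' ht.1.le) measurableSet_Ioc

lemma abel_identity (z y : ℝ) (hzy : z < y) (f f' : ℝ → ℝ) (c : ℕ → ℝ)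
    (hfderiv : ∀ t ∈ Set.Icc z y, HasDerivWithinAt f (f' t) (Set.Icc z y) t)
    (hf'cont : ∀ t ∈ Set.Icc z y, ContinuousWithinAt f' (Set.Icc z y) t) :
    ∑ n ∈ Finset.Ico ⌈z⌉₊ ⌈y⌉₊, c n * f n =
      (∑ n ∈ Finset.Ico ⌈z⌉₊ ⌈y⌉₊, c n) * f z +
      ∫ t in z..y, (∑ n ∈ Finset.Ico ⌈t⌉₊ ⌈y⌉₊, c n) * f' t := by
  set m := ⌈z⌉₊ with hm
  set M := ⌈y⌉₊ with hM
  have hfc : ContinuousOn f (Set.Icc z y) := fun t ht => (hfderiv t ht).continuousWithinAt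
  have hf'c : ContinuousOn f' (Set.Icc z y) := hf'cont
  have hmem : ∀ n ∈ Finset.Ico m M, z ≤ (n:ℝ) ∧ (n:ℝ) ≤ y := by
    intro n hn
    rw [Finset.mem_Ico] at hn
    exact ⟨Nat.ceil_le.mp hn.1, (Nat.lt_ceil.mp hn.2).le⟩
  have key : ∀ n ∈ Finset.Ico m M, c n * f n =
      c n * f z + ∫ t in z..y, Set.indicator {x | x ≤ (n:ℝ)} (fun u => c n * f' u) t := by
    intro n hn
    obtain ⟨hn1, hn2⟩ := hmem n hn
    have ftc : ∫ t in z..(n:ℝ), f' t = f n - f z := by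
      apply intervalIntegral.integral_eq_sub_of_hasDeriv_right_of_le hn1
        (hfc.mono (Set.Icc_subset_Icc le_rfl hn2))
        (fun x hx => (((hfderiv x ⟨hx.1.le, hx.2.le.trans hn2⟩).hasDerivAt
          (Icc_mem_nhds hx.1 (hx.2.trans_le hn2))).hasDerivWithinAt))
      apply ContinuousOn.intervalIntegrable
      rw [Set.uIcc_of_le hn1]
      exact hf'c.mono (Set.Icc_subset_Icc le_rfl hn2)
    rw [intervalIntegral.integral_indicator ⟨hn1, hn2⟩, intervalIntegral.integral_const_mul, ftc]
    ring
  have hIint : ∀ n ∈ Finset.Ico m M, IntervalIntegrable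
      (Set.indicator {x | x ≤ (n:ℝ)} (fun u => c n * f' u)) volume z y :=
    fun n _ => aux_ind_integrable z y hzy f' c hf'c n
  calc ∑ n ∈ Finset.Ico m M, c n * f n
      = ∑ n ∈ Finset.Ico m M, (c n * f z +
          ∫ t in z..y, Set.indicator {x | x ≤ (n:ℝ)} (fun u => c n * f' u) t) :=
        Finset.sum_congr rfl key
    _ = (∑ n ∈ Finset.Ico m M, c n) * f z +
          ∑ n ∈ Finset.Ico m M, ∫ t in z..y,
            Set.indicator {x | x ≤ (n:ℝ)} (fun u => c n * f' u) t := by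
        rw [Finset.sum_add_distrib, Finset.sum_mul]
    _ = (∑ n ∈ Finset.Ico m M, c n) * f z +
          ∫ t in z..y, ∑ n ∈ Finset.Ico m M,
            Set.indicator {x | x ≤ (n:ℝ)} (fun u => c n * f' u) t := by
        rw [intervalIntegral.integral_finset_sum hIint]
    _ = (∑ n ∈ Finset.Ico m M, c n) * f z +
          ∫ t in z..y, (∑ n ∈ Finset.Ico ⌈t⌉₊ M, c n) * f' t := by
        congr 1
        apply intervalIntegral.integral_congr
        intro t ht
        rw [Set.uIcc_of_le hzy.le] at ht
        exact aux_pointwise z y c f' ht.1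


theorem partial_summation_bound
    (z y : ℝ) (hzy : z < y) (hz : 0 < z)
    (f f' g g' : ℝ → ℝ) (c : ℕ → ℝ) (E : ℝ)
    (hfpos : ∀ t ∈ Set.Icc z y, 0 < f t)
    (hfmono : MonotoneOn f (Set.Icc z y) ∨ AntitoneOn f (Set.Icc z y))
    (hfderiv : ∀ t ∈ Set.Icc z y, HasDerivWithinAt f (f' t) (Set.Icc z y) t)
    (hf'cont : ∀ t ∈ Set.Icc z y, ContinuousWithinAt f' (Set.Icc z y) t)
    (hgderiv : ∀ t ∈ Set.Icc z y, HasDerivWithinAt g (g' t) (Set.Icc z y) t)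
    (hg'cont : ∀ t ∈ Set.Icc z y, ContinuousWithinAt g' (Set.Icc z y) t)
    (hsum : ∀ x w : ℝ, z ≤ x → x < w → w ≤ y →
      ∑ n ∈ (Finset.range ⌈w⌉₊).filter (fun (n : ℕ) => x ≤ (n : ℝ) ∧ (n : ℝ) < w), c n ≤
        g w - g x + E) :
    ∑ n ∈ (Finset.range ⌈y⌉₊).filter (fun (n : ℕ) => z ≤ (n : ℝ) ∧ (n : ℝ) < y),
        c n * f n ≤
      (∫ t in z..y, f t * g' t) + E * max (f z) (f y) := by
  have hfc : ContinuousOn f (Set.Icc z y) := fun t ht => (hfderiv t ht).continuousWithinAt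
  have hgc : ContinuousOn g (Set.Icc z y) := fun t ht => (hgderiv t ht).continuousWithinAt
  have hf'c : ContinuousOn f' (Set.Icc z y) := hf'cont
  have hg'c : ContinuousOn g' (Set.Icc z y) := hg'cont
  set D : ℝ → ℝ := fun t => ∑ n ∈ Finset.Ico ⌈t⌉₊ ⌈y⌉₊, c n with hD
  -- rewrite the sum via the Abel identity
  rw [aux_filter_eq z y, abel_identity z y hzy f f' c hfderiv hf'cont]
  -- bounds from hsum
  have hDb : ∀ t, z ≤ t → t < y → D t ≤ g y - g t + E := by
    intro t h1 h2
    have h3 := hsum t y h1 h2 le_rfl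
    rwa [aux_filter_eq] at h3
  have hCb : ∀ t, z < t → t ≤ y → D z - D t ≤ g t - g z + E := by
    intro t h1 h2
    have h3 := hsum z t le_rfl h1 h2
    rw [aux_filter_eq] at h3
    have hsplit : ∑ n ∈ Finset.Ico ⌈z⌉₊ ⌈t⌉₊, c n + ∑ n ∈ Finset.Ico ⌈t⌉₊ ⌈y⌉₊, c n =
        ∑ n ∈ Finset.Ico ⌈z⌉₊ ⌈y⌉₊, c n :=
      Finset.sum_Ico_consecutive _ (Nat.ceil_le_ceil h1.le) (Nat.ceil_le_ceil h2)
    simp only [hD]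
    linarith
  -- basic integrability facts
  have hIf' : IntervalIntegrable f' volume z y := by
    apply ContinuousOn.intervalIntegrable; rwa [Set.uIcc_of_le hzy.le]
  have hI1 : IntervalIntegrable (fun t => f t * g' t) volume z y := by
    apply ContinuousOn.intervalIntegrable; rw [Set.uIcc_of_le hzy.le]; exact hfc.mul hg'c
  have hI2 : IntervalIntegrable (fun t => g t * f' t) volume z y := by
    apply ContinuousOn.intervalIntegrable; rw [Set.uIcc_of_le hzy.le]; exact hgc.mul hf'c
  have hIDf' : IntervalIntegrable (fun t => D t * f' t) volume z y :=
    abel_integrable z y hzy f' c hf'c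
  -- FTC for f
  have hftc : ∫ t in z..y, f' t = f y - f z := by
    apply intervalIntegral.integral_eq_sub_of_hasDeriv_right_of_le hzy.le hfc
      (fun x hx => (((hfderiv x ⟨hx.1.le, hx.2.le⟩).hasDerivAt
        (Icc_mem_nhds hx.1 hx.2)).hasDerivWithinAt)) hIf'
  -- integration by parts
  have hibp : ∫ t in z..y, (g t * f' t + f t * g' t) = f y * g y - f z * g z := by
    apply intervalIntegral.integral_eq_sub_of_hasDeriv_right_of_le hzy.le (hfc.mul hgc)
    · intro x hx
      have h1 := (hfderiv x ⟨hx.1.le, hx.2.le⟩).hasDerivAt (Icc_mem_nhds hx.1 hx.2)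
      have h2 := (hgderiv x ⟨hx.1.le, hx.2.le⟩).hasDerivAt (Icc_mem_nhds hx.1 hx.2)
      have := (h1.mul h2).hasDerivWithinAt (s := Set.Ioi x)
      convert this using 1
      ring
    · exact (hI2.add hI1)
  have hgf' : ∫ t in z..y, g t * f' t =
      f y * g y - f z * g z - ∫ t in z..y, f t * g' t := by
    have h4 := intervalIntegral.integral_add hI2 hI1
    rw [hibp] at h4
    linarith
  have hDzb : D z ≤ g y - g z + E := hDb z le_rfl hzy
  have hfzpos : 0 < f z := hfpos z ⟨le_rfl, hzy.le⟩
  have hfypos : 0 < f y := hfpos y ⟨hzy.le, le_rfl⟩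
  rcases hfmono with hmono | hanti
  · -- monotone case
    have hle : f z ≤ f y := hmono ⟨le_rfl, hzy.le⟩ ⟨hzy.le, le_rfl⟩ hzy.le
    rw [max_eq_right hle]
    have hIbound : IntervalIntegrable (fun t => (g y - g t + E) * f' t) volume z y := by
      apply ContinuousOn.intervalIntegrable; rw [Set.uIcc_of_le hzy.le]
      exact ((continuousOn_const.sub hgc).add continuousOn_const).mul hf'c
    have hmono_int : (∫ t in z..y, D t * f' t) ≤ ∫ t in z..y, (g y - g t + E) * f' t := by
      apply intervalIntegral.integral_mono_ae_restrict hzy.le hIDf' hIbound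
      have hae : ∀ᵐ t ∂(volume.restrict (Set.Icc z y)), t ∈ Set.Ioo z y := by
        have h5 : ∀ᵐ t ∂(volume.restrict (Set.Icc z y)), t ∈ Set.Icc z y :=
          ae_restrict_mem measurableSet_Icc
        have h6 := ae_restrict_of_ae (μ := volume) (s := Set.Icc z y)
          (Ioo_ae_eq_Icc (μ := volume) (a := z) (b := y))
        filter_upwards [h5, h6] with t h7 h8
        exact h8.mpr h7
      filter_upwards [hae] with t ht
      have hf'nn : 0 ≤ f' t := aux_deriv_nonneg hmono ht (hfderiv t ⟨ht.1.le, ht.2.le⟩)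
      exact mul_le_mul_of_nonneg_right (hDb t ht.1.le ht.2) hf'nn
    have hEval : ∫ t in z..y, (g y - g t + E) * f' t =
        (g y + E) * (f y - f z) - ∫ t in z..y, g t * f' t := by
      have h1 : ∀ t : ℝ, (g y - g t + E) * f' t = (g y + E) * f' t - g t * f' t :=
        fun t => by ring
      simp_rw [h1]
      rw [intervalIntegral.integral_sub (hIf'.const_mul _) hI2,
        intervalIntegral.integral_const_mul, hftc]
    have hprod : f z * D z ≤ f z * (g y - g z + E) :=
      mul_le_mul_of_nonneg_left hDzb hfzpos.le
    nlinarith [hmono_int, hEval, hgf', hprod]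
  · -- antitone case
    have hle : f y ≤ f z := hanti ⟨le_rfl, hzy.le⟩ ⟨hzy.le, le_rfl⟩ hzy.le
    rw [max_eq_left hle]
    have hIbound : IntervalIntegrable (fun t => (D z + g z - E - g t) * f' t) volume z y := by
      apply ContinuousOn.intervalIntegrable; rw [Set.uIcc_of_le hzy.le]
      exact (continuousOn_const.sub hgc).mul hf'c
    have hmono_int : (∫ t in z..y, D t * f' t) ≤
        ∫ t in z..y, (D z + g z - E - g t) * f' t := by
      apply intervalIntegral.integral_mono_ae_restrict hzy.le hIDf' hIbound
      have hae : ∀ᵐ t ∂(volume.restrict (Set.Icc z y)), t ∈ Set.Ioo z y := by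
        have h5 : ∀ᵐ t ∂(volume.restrict (Set.Icc z y)), t ∈ Set.Icc z y :=
          ae_restrict_mem measurableSet_Icc
        have h6 := ae_restrict_of_ae (μ := volume) (s := Set.Icc z y)
          (Ioo_ae_eq_Icc (μ := volume) (a := z) (b := y))
        filter_upwards [h5, h6] with t h7 h8
        exact h8.mpr h7
      filter_upwards [hae] with t ht
      have hmneg : MonotoneOn (fun x => -f x) (Set.Icc z y) := fun a ha b hb hab =>
        neg_le_neg (hanti ha hb hab)
      have hf'np : 0 ≤ -f' t :=
        aux_deriv_nonneg hmneg ht ((hfderiv t ⟨ht.1.le, ht.2.le⟩).neg)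
      have hlb : D z + g z - E - g t ≤ D t := by
        have := hCb t ht.1 ht.2.le
        linarith
      nlinarith
    have hEval : ∫ t in z..y, (D z + g z - E - g t) * f' t =
        (D z + g z - E) * (f y - f z) - ∫ t in z..y, g t * f' t := by
      have h1 : ∀ t : ℝ, (D z + g z - E - g t) * f' t =
          (D z + g z - E) * f' t - g t * f' t := fun t => by ring
      simp_rw [h1]
      rw [intervalIntegral.integral_sub (hIf'.const_mul _) hI2,
        intervalIntegral.integral_const_mul, hftc]
    have hprod : f y * D z ≤ f y * (g y - g z + E) :=
      mul_le_mul_of_nonneg_left hDzb hfypos.le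
    nlinarith [hmono_int, hEval, hgf', hprod]
end

section
/- Suppose that for all 2 ≤ x ≤ 4·10^9 we have e^γ log x < ∏_{p ≤ x}(1 − 1/p)^{-1} < e^γ log x + 2e^γ/√x. Then for 3.5·10^5 ≤ z < 4·10^9 and 3 ≤ u ≤ z, ∏_{u ≤ p < z}(1 − 1/p)^{-1} ≤ ((log z)/(log u))·(1 + 2/(√z · log z)). -/
open Real Finset

private lemma prod_lt_eq (z y x : ℝ) (hyz : y ≤ z)
    (hx1 : (⌈y⌉₊ : ℝ) - 1 ≤ x) (hx2 : x < y) (hx0 : 0 ≤ x) :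
    ∏ p ∈ (Finset.range ⌈z⌉₊).filter
        (fun p => Nat.Prime p ∧ (p : ℝ) < y), (1 - 1 / (p : ℝ))⁻¹
      = ∏ p ∈ (Finset.range (⌊x⌋₊ + 1)).filter
          (fun p => Nat.Prime p ∧ (p : ℝ) ≤ x), (1 - 1 / (p : ℝ))⁻¹ := by
  congr 1
  ext p
  simp only [Finset.mem_filter, Finset.mem_range]
  constructor
  · rintro ⟨hp, hprime, hlt⟩
    have h1 : p < ⌈y⌉₊ := Nat.lt_ceil.mpr hlt
    have h2 : (p : ℝ) + 1 ≤ (⌈y⌉₊ : ℝ) := by exact_mod_cast Nat.succ_le_of_lt h1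
    have hple : (p : ℝ) ≤ x := by linarith
    exact ⟨Nat.lt_succ_of_le (Nat.le_floor hple), hprime, hple⟩
  · rintro ⟨hp, hprime, hle⟩
    have hlt : (p : ℝ) < y := lt_of_le_of_lt hle hx2
    exact ⟨Nat.lt_ceil.mpr (lt_of_lt_of_le hlt hyz), hprime, hlt⟩

private lemma factor_pos {p : ℕ} (hp : Nat.Prime p) : 0 < (1 - 1 / (p : ℝ))⁻¹ := by
  have h2 : (2 : ℝ) ≤ (p : ℝ) := by exact_mod_cast hp.two_le
  have h3 : 1 / (p : ℝ) ≤ 1 / 2 := by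
    apply one_div_le_one_div_of_le <;> linarith
  have : (0:ℝ) < 1 - 1 / (p : ℝ) := by linarith
  positivity

theorem mertens_ratio_conditional
    (hmertens : ∀ x : ℝ, 2 ≤ x → x ≤ 4e9 →
      Real.exp Real.eulerMascheroniConstant * Real.log x <
        (∏ p ∈ (Finset.range (⌊x⌋₊ + 1)).filter
            (fun p => Nat.Prime p ∧ (p : ℝ) ≤ x), (1 - 1 / (p : ℝ))⁻¹) ∧
      (∏ p ∈ (Finset.range (⌊x⌋₊ + 1)).filter
          (fun p => Nat.Prime p ∧ (p : ℝ) ≤ x), (1 - 1 / (p : ℝ))⁻¹) <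
        Real.exp Real.eulerMascheroniConstant * Real.log x +
          2 * Real.exp Real.eulerMascheroniConstant / Real.sqrt x)
    (u z : ℝ) (hz1 : 3.5e5 ≤ z) (hz2 : z < 4e9) (hu : 3 ≤ u) (huz : u ≤ z) :
    ∏ p ∈ (Finset.range ⌈z⌉₊).filter
        (fun p => Nat.Prime p ∧ u ≤ (p : ℝ) ∧ (p : ℝ) < z),
        (1 - 1 / (p : ℝ))⁻¹ ≤
      (Real.log z / Real.log u) * (1 + 2 / (Real.sqrt z * Real.log z)) := by
  set E := Real.exp Real.eulerMascheroniConstant with hE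
  have hEpos : 0 < E := Real.exp_pos _
  have hz1' : (3.5e5 : ℝ) ≤ z := hz1
  have hz0 : (0:ℝ) < z := by norm_num at hz1' ⊢; linarith
  have hu0 : (0:ℝ) < u := by linarith
  have hLz : 0 < Real.log z := Real.log_pos (by norm_num at hz1' ⊢; linarith)
  have hLu : 0 < Real.log u := Real.log_pos (by linarith)
  have hS : 0 < Real.sqrt z := Real.sqrt_pos.mpr hz0
  set N := ∏ p ∈ (Finset.range ⌈z⌉₊).filter
      (fun p => Nat.Prime p ∧ u ≤ (p : ℝ) ∧ (p : ℝ) < z), (1 - 1 / (p : ℝ))⁻¹ with hNdef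
  set D := ∏ p ∈ (Finset.range ⌈z⌉₊).filter
      (fun p => Nat.Prime p ∧ (p : ℝ) < u), (1 - 1 / (p : ℝ))⁻¹ with hDdef
  set A := ∏ p ∈ (Finset.range ⌈z⌉₊).filter
      (fun p => Nat.Prime p ∧ (p : ℝ) < z), (1 - 1 / (p : ℝ))⁻¹ with hAdef
  -- split A = N * D
  have hsplit : A = N * D := by
    rw [hAdef, ← Finset.prod_filter_mul_prod_filter_not
      ((Finset.range ⌈z⌉₊).filter (fun p => Nat.Prime p ∧ (p : ℝ) < z))
      (fun p => u ≤ (p : ℝ))]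
    congr 1
    · rw [hNdef, Finset.filter_filter]
      congr 1
      ext p
      simp only [Finset.mem_filter, Finset.mem_range]
      tauto
    · rw [hDdef, Finset.filter_filter]
      congr 1
      ext p
      simp only [Finset.mem_filter, Finset.mem_range, not_le]
      constructor
      · rintro ⟨hp, ⟨h1, h2⟩, h3⟩; exact ⟨hp, h1, h3⟩
      · rintro ⟨hp, h1, h2⟩; exact ⟨hp, ⟨h1, lt_of_lt_of_le h2 huz⟩, h2⟩
  have hNpos : 0 < N := by
    rw [hNdef]
    apply Finset.prod_pos
    intro p hp
    simp only [Finset.mem_filter] at hp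
    exact factor_pos hp.2.1
  have hDpos : 0 < D := by
    rw [hDdef]
    apply Finset.prod_pos
    intro p hp
    simp only [Finset.mem_filter] at hp
    exact factor_pos hp.2.1
  -- lower bound for D
  have hDbound : E * Real.log u ≤ D := by
    have hc : max 2 ((⌈u⌉₊ : ℝ) - 1) < u := by
      apply max_lt (by linarith)
      have := Nat.ceil_lt_add_one (le_of_lt hu0)
      linarith
    have htend : Filter.Tendsto (fun x => E * Real.log x) (nhdsWithin u (Set.Iio u))
        (nhds (E * Real.log u)) :=
      ((Real.continuousAt_log hu0.ne').const_mul E).mono_left nhdsWithin_le_nhds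
    apply le_of_tendsto htend
    filter_upwards [Ioo_mem_nhdsLT hc] with x hx
    have hx2 : 2 ≤ x := le_of_lt (lt_of_le_of_lt (le_max_left _ _) hx.1)
    have hx4 : x ≤ 4e9 := by
      have : x < u := hx.2
      norm_num at hz2 ⊢
      linarith
    have heq : D = ∏ p ∈ (Finset.range (⌊x⌋₊ + 1)).filter
        (fun p => Nat.Prime p ∧ (p : ℝ) ≤ x), (1 - 1 / (p : ℝ))⁻¹ :=
      prod_lt_eq z u x huz (le_of_lt (lt_of_le_of_lt (le_max_right _ _) hx.1))
        hx.2 (by linarith)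
    rw [heq]
    exact (hmertens x hx2 hx4).1.le
  -- upper bound for A
  have hAbound : A ≤ E * Real.log z + 2 * E / Real.sqrt z := by
    have hc : max 2 ((⌈z⌉₊ : ℝ) - 1) < z := by
      apply max_lt (by norm_num at hz1' ⊢; linarith)
      have := Nat.ceil_lt_add_one (le_of_lt hz0)
      linarith
    have htend : Filter.Tendsto (fun x => E * Real.log x + 2 * E / Real.sqrt x)
        (nhdsWithin z (Set.Iio z)) (nhds (E * Real.log z + 2 * E / Real.sqrt z)) := by
      have h1 : Filter.Tendsto (fun x => E * Real.log x) (nhds z)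
          (nhds (E * Real.log z)) := (Real.continuousAt_log hz0.ne').const_mul E
      have h2 : Filter.Tendsto (fun x => 2 * E / Real.sqrt x) (nhds z)
          (nhds (2 * E / Real.sqrt z)) :=
        tendsto_const_nhds.div Real.continuous_sqrt.continuousAt hS.ne'
      exact (h1.add h2).mono_left nhdsWithin_le_nhds
    apply ge_of_tendsto htend
    filter_upwards [Ioo_mem_nhdsLT hc] with x hx
    have hx2 : 2 ≤ x := le_of_lt (lt_of_le_of_lt (le_max_left _ _) hx.1)
    have hx4 : x ≤ 4e9 := by
      have : x < z := hx.2
      norm_num at hz2 ⊢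
      linarith
    have heq : A = ∏ p ∈ (Finset.range (⌊x⌋₊ + 1)).filter
        (fun p => Nat.Prime p ∧ (p : ℝ) ≤ x), (1 - 1 / (p : ℝ))⁻¹ :=
      prod_lt_eq z z x le_rfl (le_of_lt (lt_of_le_of_lt (le_max_right _ _) hx.1))
        hx.2 (by linarith)
    rw [heq]
    exact (hmertens x hx2 hx4).2.le
  -- final arithmetic
  have hkey : N * (E * Real.log u) ≤
      (Real.log z / Real.log u * (1 + 2 / (Real.sqrt z * Real.log z))) * (E * Real.log u) := by
    calc N * (E * Real.log u) ≤ N * D := by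
          apply mul_le_mul_of_nonneg_left hDbound hNpos.le
      _ = A := hsplit.symm
      _ ≤ E * Real.log z + 2 * E / Real.sqrt z := hAbound
      _ = (Real.log z / Real.log u * (1 + 2 / (Real.sqrt z * Real.log z))) *
            (E * Real.log u) := by
          field_simp
  exact le_of_mul_le_mul_right hkey (by positivity)
end

section
/- Let N ≥ 10^40 be an integer, A = {a ∈ ℤ : N < a < N + 3N^{2/3}}, X = max(A), z = X^{1/5}, y = X^{1/1.85}. Then the sum over primes q with z ≤ q < y of the number of elements of A divisible by q² is at most 0.03·|A|^{0.82}. -/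
open Real Finset

open Classical in
lemma count_div_le (α L : ℝ) (hL : 0 ≤ L) (d : ℤ) (hd : 0 < d)
    (S : Finset ℤ) (hS : ∀ a ∈ S, α < (a : ℝ) ∧ (a : ℝ) < α + L) :
    ((S.filter (fun a => d ∣ a)).card : ℝ) ≤ L / (d : ℝ) + 1 := by
  have hdR : (0:ℝ) < (d:ℝ) := by exact_mod_cast hd
  have hsub : (S.filter (fun a => d ∣ a)).card ≤
      (Finset.Icc (⌊α/(d:ℝ)⌋ + 1) ⌊(α+L)/(d:ℝ)⌋).card := by
    apply Finset.card_le_card_of_injOn (fun a => a / d)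
    · intro a ha
      change a ∈ S.filter (fun a => d ∣ a) at ha
      change a / d ∈ Finset.Icc (⌊α/(d:ℝ)⌋ + 1) ⌊(α+L)/(d:ℝ)⌋
      simp only [Finset.mem_filter] at ha
      obtain ⟨haS, hdvd⟩ := ha
      obtain ⟨h1, h2⟩ := hS a haS
      obtain ⟨m, rfl⟩ := hdvd
      rw [Int.mul_ediv_cancel_left _ (ne_of_gt hd)]
      have hcast : ((d * m : ℤ) : ℝ) = (d:ℝ) * (m:ℝ) := by push_cast; ring
      simp only [Finset.mem_Icc, Int.add_one_le_iff]
      constructor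
      · have : α / d < (m:ℝ) := by
          rw [div_lt_iff₀ hdR]
          nlinarith [h1, hcast]
        exact_mod_cast Int.floor_lt.mpr this
      · have : (m:ℝ) ≤ (α + L) / d := by
          rw [le_div_iff₀ hdR]
          nlinarith [h2, hcast]
        exact Int.le_floor.mpr this
    · intro a ha b hb hab
      simp only [Finset.coe_filter, Set.mem_setOf_eq] at ha hb
      have ha' : d * (a / d) = a := Int.mul_ediv_cancel' ha.2
      have hb' : d * (b / d) = b := Int.mul_ediv_cancel' hb.2
      simp only at hab
      rw [← ha', ← hb', hab]
  have key : ∀ x : ℤ, (x:ℝ) ≤ L/(d:ℝ) + 1 → ((x.toNat : ℝ)) ≤ L/(d:ℝ) + 1 := by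
    intro x hx
    rcases le_or_gt x 0 with h | h
    · rw [Int.toNat_of_nonpos h]
      have : (0:ℝ) ≤ L / d := by positivity
      simp
      linarith
    · have hc : ((x.toNat : ℕ) : ℝ) = (x : ℝ) := by exact_mod_cast Int.toNat_of_nonneg h.le
      rwa [hc]
  have hcard : ((Finset.Icc (⌊α/(d:ℝ)⌋ + 1) ⌊(α+L)/(d:ℝ)⌋).card : ℝ) ≤ L / d + 1 := by
    rw [Int.card_Icc]
    apply key
    have h1 : α / d - 1 < (⌊α/(d:ℝ)⌋ : ℝ) := Int.sub_one_lt_floor _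
    have h2 : ((⌊(α+L)/(d:ℝ)⌋ : ℤ) : ℝ) ≤ (α + L)/d := Int.floor_le _
    have h3 : (α + L)/d - α/d = L / d := by ring
    push_cast
    linarith
  calc ((S.filter (fun a => d ∣ a)).card : ℝ)
      ≤ ((Finset.Icc (⌊α/(d:ℝ)⌋ + 1) ⌊(α+L)/(d:ℝ)⌋).card : ℝ) := by exact_mod_cast hsub
    _ ≤ L / d + 1 := hcard

lemma card_le_of_close (S : Finset ℕ) (D : ℝ) (hD : 0 ≤ D)
    (h : ∀ a ∈ S, ∀ b ∈ S, a ≤ b → (b : ℝ) - (a : ℝ) ≤ D) : (S.card : ℝ) ≤ D + 1 := by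
  rcases S.eq_empty_or_nonempty with rfl | hne
  · simp; linarith
  · have hsub : S ⊆ Finset.Icc (S.min' hne) (S.min' hne + ⌊D⌋₊) := by
      intro b hb
      have h1 : S.min' hne ≤ b := S.min'_le b hb
      have h2 : (b:ℝ) - (S.min' hne : ℝ) ≤ D := h _ (S.min'_mem hne) b hb h1
      have h3 : ((b - S.min' hne : ℕ) : ℝ) ≤ D := by
        rw [Nat.cast_sub h1]; exact h2
      have := Nat.le_floor h3
      simp only [Finset.mem_Icc]
      omega
    have hc := Finset.card_le_card hsub
    rw [Nat.card_Icc] at hc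
    have h4 : (⌊D⌋₊ : ℝ) ≤ D := Nat.floor_le hD
    have h5 : S.card ≤ ⌊D⌋₊ + 1 := by omega
    calc (S.card : ℝ) ≤ ((⌊D⌋₊ + 1 : ℕ) : ℝ) := by exact_mod_cast h5
      _ ≤ D + 1 := by push_cast; linarith

lemma sum_inv_sq_le' (a b : ℕ) (ha : 2 ≤ a) :
    ∑ q ∈ Finset.Ico a b, (1 : ℝ) / (q : ℝ) ^ 2 ≤ 1 / ((a : ℝ) - 1) := by
  have ha1 : (1:ℝ) ≤ (a:ℝ) - 1 := by
    have : (2:ℝ) ≤ (a:ℝ) := by exact_mod_cast ha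
    linarith
  rcases le_or_gt b a with hb | hb
  · rw [Finset.Ico_eq_empty (by omega)]
    rw [Finset.sum_empty]
    exact div_nonneg zero_le_one (by linarith)
  · have he : Finset.Ico a b = Finset.Ioc (a-1) (b-1) := by
      ext x
      simp only [Finset.mem_Ico, Finset.mem_Ioc]
      omega
    rw [he]
    have hk : a - 1 ≠ 0 := by omega
    have hkn : a - 1 ≤ b - 1 := by omega
    have := sum_Ioc_inv_sq_le_sub (α := ℝ) hk hkn
    have hbpos : (0:ℝ) ≤ ((b-1 : ℕ):ℝ)⁻¹ := by positivity
    have hcast : (((a-1:ℕ)):ℝ) = (a:ℝ) - 1 := by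
      have : (1:ℕ) ≤ a := by omega
      push_cast [Nat.cast_sub this]
      ring
    calc ∑ q ∈ Finset.Ioc (a-1) (b-1), (1 : ℝ) / (q : ℝ) ^ 2
        = ∑ q ∈ Finset.Ioc (a-1) (b-1), ((q : ℝ) ^ 2)⁻¹ := by
          apply Finset.sum_congr rfl; intro x _; rw [one_div]
      _ ≤ ((a-1:ℕ):ℝ)⁻¹ - ((b-1:ℕ):ℝ)⁻¹ := this
      _ ≤ ((a-1:ℕ):ℝ)⁻¹ := by linarith
      _ = 1 / ((a:ℝ) - 1) := by rw [hcast, one_div]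
open Real Finset

set_option maxHeartbeats 2000000 in
open Classical in
theorem sum_card_div_sq_le (N : ℤ) (hN : (10 : ℤ) ^ 40 ≤ N)
    (A : Finset ℤ)
    (hA : ∀ a : ℤ, a ∈ A ↔ (N : ℝ) < (a : ℝ) ∧
        (a : ℝ) < (N : ℝ) + 3 * (N : ℝ) ^ ((2 : ℝ) / 3))
    (X : ℤ) (hXA : X ∈ A) (hXmax : ∀ a ∈ A, a ≤ X)
    (z y : ℝ) (hz : z = (X : ℝ) ^ ((1 : ℝ) / 5))
    (hy : y = (X : ℝ) ^ ((1 : ℝ) / 1.85)) :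
    ∑ q ∈ (Finset.range ⌈y⌉₊).filter
        (fun q => Nat.Prime q ∧ z ≤ (q : ℝ) ∧ (q : ℝ) < y),
        ((A.filter (fun a => (q : ℤ) ^ 2 ∣ a)).card : ℝ) ≤
      0.03 * (A.card : ℝ) ^ (0.82 : ℝ) := by
  set u := (N : ℝ) with hu_def
  have hu : (10:ℝ)^40 ≤ u := by
    have h : ((10:ℤ)^40 : ℝ) ≤ (N:ℝ) := by exact_mod_cast hN
    push_cast at h
    exact h
  have hu0 : (0:ℝ) < u := lt_of_lt_of_le (by norm_num) hu
  have hu1 : (1:ℝ) ≤ u := le_trans (by norm_num) hu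
  have hupos : ∀ p : ℝ, (0:ℝ) < u ^ p := fun p => Real.rpow_pos_of_pos hu0 p
  have humono : ∀ p q : ℝ, p ≤ q → u ^ p ≤ u ^ q := fun p q h =>
    Real.rpow_le_rpow_of_exponent_le hu1 h
  have hpow10 : ∀ r : ℝ, ((10:ℝ)^(40:ℕ)) ^ r = (10:ℝ) ^ (40 * r) := by
    intro r
    rw [← Real.rpow_natCast 10 40, ← Real.rpow_mul (by norm_num)]
    norm_num
  have hu_rpow_ge : ∀ r : ℝ, 0 ≤ r → (10:ℝ) ^ (40*r) ≤ u ^ r := by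
    intro r hr
    rw [← hpow10 r]
    exact Real.rpow_le_rpow (by positivity) hu hr
  set L := 3 * u ^ ((2:ℝ)/3) with hL_def
  have hL0 : (0:ℝ) < L := by positivity
  have h23 : (1:ℝ) ≤ u ^ ((2:ℝ)/3) := by
    have := humono 0 (2/3) (by norm_num)
    rwa [Real.rpow_zero] at this
  -- X facts
  have hXr1 : u < (X:ℝ) := ((hA X).mp hXA).1
  have hXr2 : (X:ℝ) < u + L := ((hA X).mp hXA).2
  -- z facts
  have hz_lb : u ^ ((1:ℝ)/5) ≤ z := by
    rw [hz]
    exact Real.rpow_le_rpow hu0.le hXr1.le (by norm_num)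
  have h15 : (100000000:ℝ) ≤ u ^ ((1:ℝ)/5) := by
    have h := hu_rpow_ge (1/5) (by norm_num)
    have : (10:ℝ) ^ ((40:ℝ)*(1/5)) = 100000000 := by
      rw [show (40:ℝ)*(1/5) = ((8:ℕ):ℝ) by norm_num, Real.rpow_natCast]
      norm_num
    linarith
  have hz8 : (100000000:ℝ) ≤ z := le_trans h15 hz_lb
  set w := u ^ ((2:ℝ)/5) with hw_def
  have hw0 : (0:ℝ) < w := hupos _
  have hw1 : (1:ℝ) ≤ w := by
    have := humono 0 (2/5) (by norm_num)
    rwa [Real.rpow_zero] at this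
  set T := ⌈w⌉₊ with hT_def
  have hwT : w ≤ (T:ℝ) := Nat.le_ceil w
  have hT_le : (T:ℝ) ≤ w + 1 := (Nat.ceil_lt_add_one hw0.le).le
  set M : ℤ := ⌈2 * u ^ ((1:ℝ)/5)⌉ with hM_def
  have hM_lb : 2 * u ^ ((1:ℝ)/5) ≤ (M:ℝ) := Int.le_ceil _
  have hM_ub : (M:ℝ) ≤ 2 * u ^ ((1:ℝ)/5) + 1 := (Int.ceil_lt_add_one _).le
  have hM0 : (0:ℤ) ≤ M := by
    have : (0:ℝ) < (M:ℝ) := lt_of_lt_of_le (by positivity) hM_lb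
    exact_mod_cast this.le
  set nz := ⌈z⌉₊ with hnz_def
  have hnz : z ≤ (nz:ℝ) := Nat.le_ceil z
  have hnz2 : 2 ≤ nz := by
    have : (1:ℝ) < z := by linarith
    have : ((1:ℕ):ℝ) < z := by push_cast; linarith
    exact Nat.lt_ceil.mpr this
  set Q := (Finset.range ⌈y⌉₊).filter
      (fun q => Nat.Prime q ∧ z ≤ (q : ℝ) ∧ (q : ℝ) < y) with hQ_def
  have hQz : ∀ q ∈ Q, z ≤ (q:ℝ) := by
    intro q hq
    rw [hQ_def, Finset.mem_filter] at hq
    exact hq.2.2.1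
  have hQ1 : ∀ q ∈ Q, 1 ≤ q := by
    intro q hq
    have h := hQz q hq
    by_contra hc
    push_neg at hc
    interval_cases q
    · simp at h; linarith
  -- key counting bound, part 1
  have hw2 : w^2 = u ^ ((4:ℝ)/5) := by
    rw [hw_def, ← Real.rpow_natCast (u ^ ((2:ℝ)/5)) 2, ← Real.rpow_mul hu0.le]
    norm_num
  have hpart1 : ∑ q ∈ Q.filter (fun q => q < T),
      ((A.filter (fun a => (q:ℤ)^2 ∣ a)).card : ℝ) ≤ 6 * u ^ ((7:ℝ)/15) + (w + 1) := by
    have hstep : ∀ q ∈ Q.filter (fun q => q < T),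
        ((A.filter (fun a => (q:ℤ)^2 ∣ a)).card : ℝ) ≤ L / ((q:ℝ)^2) + 1 := by
      intro q hq
      have hmem := Finset.mem_filter.mp hq
      have hq1 : 1 ≤ q := hQ1 q hmem.1
      have hd : (0:ℤ) < (q:ℤ)^2 := by
        have h0 : (0:ℤ) < (q:ℤ) := by exact_mod_cast hq1
        positivity
      have hcount := count_div_le u L hL0.le ((q:ℤ)^2) hd A (fun a ha => (hA a).mp ha)
      have hcast : (((q:ℤ)^2 : ℤ):ℝ) = ((q:ℕ):ℝ)^2 := by push_cast; ring
      rw [hcast] at hcount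
      exact hcount
    have hsubQ : Q.filter (fun q => q < T) ⊆ Finset.Ico nz T := by
      intro q hq
      have hmem := Finset.mem_filter.mp hq
      rw [Finset.mem_Ico]
      exact ⟨Nat.ceil_le.mpr (hQz q hmem.1), hmem.2⟩
    have hz2 : (2:ℝ) ≤ z := by linarith
    have hzpos : (0:ℝ) < z := by linarith
    have hnzpos : (0:ℝ) < (nz:ℝ) - 1 := by linarith [hnz]
    calc ∑ q ∈ Q.filter (fun q => q < T), ((A.filter (fun a => (q:ℤ)^2 ∣ a)).card : ℝ)
        ≤ ∑ q ∈ Q.filter (fun q => q < T), (L / ((q:ℝ)^2) + 1) := Finset.sum_le_sum hstep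
      _ ≤ ∑ q ∈ Finset.Ico nz T, (L / ((q:ℝ)^2) + 1) := by
          apply Finset.sum_le_sum_of_subset_of_nonneg hsubQ
          intro q _ _
          positivity
      _ = L * (∑ q ∈ Finset.Ico nz T, 1/((q:ℝ)^2)) + ((Finset.Ico nz T).card : ℝ) := by
          rw [Finset.sum_add_distrib, Finset.mul_sum]
          simp [mul_one_div, div_eq_mul_inv]
      _ ≤ L * (1/((nz:ℝ)-1)) + (T:ℝ) := by
          have hs := sum_inv_sq_le' nz T hnz2
          have hcard : ((Finset.Ico nz T).card : ℝ) ≤ (T:ℝ) := by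
            rw [Nat.card_Ico]
            exact_mod_cast Nat.sub_le T nz
          have := mul_le_mul_of_nonneg_left hs hL0.le
          linarith
      _ ≤ 6 * u ^ ((7:ℝ)/15) + (w + 1) := by
          have h1 : (1:ℝ)/((nz:ℝ)-1) ≤ 2/z := by
            rw [div_le_div_iff₀ hnzpos hzpos]
            linarith [hnz]
          have h2 : (2:ℝ)/z ≤ 2 / u ^ ((1:ℝ)/5) := by
            apply div_le_div_of_nonneg_left (by norm_num) (hupos _) hz_lb
          have hsubpow : u ^ ((2:ℝ)/3) / u ^ ((1:ℝ)/5) = u ^ ((7:ℝ)/15) := by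
            rw [← Real.rpow_sub hu0]; norm_num
          have h3 : L * (2 / u ^ ((1:ℝ)/5)) = 6 * u ^ ((7:ℝ)/15) := by
            rw [hL_def, ← hsubpow]
            field_simp
            ring
          have h4 : L * (1/((nz:ℝ)-1)) ≤ 6 * u ^ ((7:ℝ)/15) := by
            calc L * (1/((nz:ℝ)-1)) ≤ L * (2 / u ^ ((1:ℝ)/5)) :=
                  mul_le_mul_of_nonneg_left (h1.trans h2) hL0.le
              _ = 6 * u ^ ((7:ℝ)/15) := h3
          linarith [hT_le]
  have hpart2 : ∑ q ∈ Q.filter (fun q => ¬ q < T),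
      ((A.filter (fun a => (q:ℤ)^2 ∣ a)).card : ℝ) ≤
      (2 * u ^ ((1:ℝ)/5) + 1) * (1.5 * u ^ ((4:ℝ)/15) + 1) := by
    have hQ2w : ∀ q : ℕ, q ∈ Q → ¬ q < T → w ≤ (q:ℝ) := by
      intro q _ hq
      have : T ≤ q := not_lt.mp hq
      calc w ≤ (T:ℝ) := hwT
        _ ≤ (q:ℝ) := by exact_mod_cast this
    have hstepA : ∀ q ∈ Q.filter (fun q => ¬ q < T),
        ((A.filter (fun a => (q:ℤ)^2 ∣ a)).card : ℝ) ≤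
        (((Finset.Icc (1:ℤ) M).filter (fun m => (q:ℤ)^2 * m ∈ A)).card : ℝ) := by
      intro q hq
      have hmemq := Finset.mem_filter.mp hq
      have hwq : w ≤ (q:ℝ) := hQ2w q hmemq.1 hmemq.2
      have hq1 : 1 ≤ q := hQ1 q (Finset.mem_filter.mp hq).1
      have hqz : (0:ℤ) < (q:ℤ)^2 := by
        have h0 : (0:ℤ) < (q:ℤ) := by exact_mod_cast hq1
        positivity
      have hq2 : u ^ ((4:ℝ)/5) ≤ ((q:ℕ):ℝ)^2 := by
        rw [← hw2]
        exact pow_le_pow_left₀ hw0.le hwq 2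
      apply Nat.cast_le.mpr
      apply Finset.card_le_card_of_injOn (fun a => a / (q:ℤ)^2)
      · intro a ha
        change a ∈ A.filter (fun a => (q:ℤ)^2 ∣ a) at ha
        change a / (q:ℤ)^2 ∈ (Finset.Icc (1:ℤ) M).filter (fun m => (q:ℤ)^2 * m ∈ A)
        simp only [Finset.mem_filter] at ha ⊢
        obtain ⟨haA, hdvd⟩ := ha
        have ha1 := ((hA a).mp haA).1
        have ha2 := ((hA a).mp haA).2
        have haeq : (q:ℤ)^2 * (a / (q:ℤ)^2) = a := Int.mul_ediv_cancel' hdvd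
        have ha_pos : (0:ℤ) < a := by
          have : (0:ℝ) < (a:ℝ) := lt_trans hu0 ha1
          exact_mod_cast this
        have hm1 : (1:ℤ) ≤ a / (q:ℤ)^2 := by
          have hle : (q:ℤ)^2 ≤ a := Int.le_of_dvd ha_pos hdvd
          rw [Int.le_ediv_iff_mul_le hqz]
          linarith
        refine ⟨Finset.mem_Icc.mpr ⟨hm1, ?_⟩, by rw [haeq]; exact haA⟩
        -- m ≤ M
        have hmR : ((a / (q:ℤ)^2 : ℤ):ℝ) * ((q:ℕ):ℝ)^2 = (a:ℝ) := by
          have := congrArg (fun t : ℤ => (t:ℝ)) haeq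
          push_cast at this
          linarith [this]
        have hm1R : (1:ℝ) ≤ ((a / (q:ℤ)^2 : ℤ):ℝ) := by exact_mod_cast hm1
        have hLu : L ≤ u := by
          have h13 : (3:ℝ) ≤ u ^ ((1:ℝ)/3) := by
            have h := hu_rpow_ge (1/3) (by norm_num)
            have h2 : (10:ℝ) ^ ((1:ℝ)) ≤ (10:ℝ) ^ ((40:ℝ)*(1/3)) :=
              Real.rpow_le_rpow_of_exponent_le (by norm_num) (by norm_num)
            rw [Real.rpow_one] at h2
            linarith
          have hid : u ^ ((1:ℝ)/3) * u ^ ((2:ℝ)/3) = u := by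
            rw [← Real.rpow_add hu0]
            norm_num
          rw [hL_def]
          nlinarith [hupos ((2:ℝ)/3)]
        have hid2 : u ^ ((1:ℝ)/5) * u ^ ((4:ℝ)/5) = u := by
          rw [← Real.rpow_add hu0]
          norm_num
        have hfin : ((a / (q:ℤ)^2 : ℤ):ℝ) ≤ 2 * u ^ ((1:ℝ)/5) := by
          nlinarith [hupos ((4:ℝ)/5), hupos ((1:ℝ)/5)]
        have : ((a / (q:ℤ)^2 : ℤ):ℝ) ≤ (M:ℝ) := le_trans hfin hM_lb
        exact_mod_cast this
      · intro a ha b hb hab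
        simp only [Finset.coe_filter, Set.mem_setOf_eq] at ha hb
        have ha' : (q:ℤ)^2 * (a / (q:ℤ)^2) = a := Int.mul_ediv_cancel' ha.2
        have hb' : (q:ℤ)^2 * (b / (q:ℤ)^2) = b := Int.mul_ediv_cancel' hb.2
        simp only at hab
        rw [← ha', ← hb', hab]
    have hswap : ∑ q ∈ Q.filter (fun q => ¬ q < T),
        ((((Finset.Icc (1:ℤ) M).filter (fun m => (q:ℤ)^2 * m ∈ A)).card : ℝ))
        = ∑ m ∈ Finset.Icc (1:ℤ) M,
          (((Q.filter (fun q => ¬ q < T)).filter (fun q : ℕ => ((q:ℤ))^2 * m ∈ A)).card : ℝ) := by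
      have e1 : ∀ q : ℕ, (((Finset.Icc (1:ℤ) M).filter (fun m => (q:ℤ)^2 * m ∈ A)).card : ℝ)
          = ∑ m ∈ Finset.Icc (1:ℤ) M, (if (q:ℤ)^2 * m ∈ A then (1:ℝ) else 0) := by
        intro q
        rw [Finset.sum_boole]
      have e2 : ∀ m : ℤ, (((Q.filter (fun q => ¬ q < T)).filter
            (fun q : ℕ => ((q:ℤ))^2 * m ∈ A)).card : ℝ)
          = ∑ q ∈ Q.filter (fun q => ¬ q < T), (if (q:ℤ)^2 * m ∈ A then (1:ℝ) else 0) := by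
        intro m
        rw [Finset.sum_boole]
      calc ∑ q ∈ Q.filter (fun q => ¬ q < T),
            ((((Finset.Icc (1:ℤ) M).filter (fun m => (q:ℤ)^2 * m ∈ A)).card : ℝ))
          = ∑ q ∈ Q.filter (fun q => ¬ q < T), ∑ m ∈ Finset.Icc (1:ℤ) M,
              (if (q:ℤ)^2 * m ∈ A then (1:ℝ) else 0) := Finset.sum_congr rfl (fun q _ => e1 q)
        _ = ∑ m ∈ Finset.Icc (1:ℤ) M, ∑ q ∈ Q.filter (fun q => ¬ q < T),
              (if (q:ℤ)^2 * m ∈ A then (1:ℝ) else 0) := Finset.sum_comm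
        _ = ∑ m ∈ Finset.Icc (1:ℤ) M, (((Q.filter (fun q => ¬ q < T)).filter
              (fun q : ℕ => ((q:ℤ))^2 * m ∈ A)).card : ℝ) :=
            Finset.sum_congr rfl (fun m _ => (e2 m).symm)
    have hstepC : ∀ m ∈ Finset.Icc (1:ℤ) M,
        (((Q.filter (fun q => ¬ q < T)).filter (fun q : ℕ => ((q:ℤ))^2 * m ∈ A)).card : ℝ) ≤
        1.5 * u ^ ((4:ℝ)/15) + 1 := by
      intro m hm
      have hm1 : (1:ℤ) ≤ m := (Finset.mem_Icc.mp hm).1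
      have hm1R : (1:ℝ) ≤ (m:ℝ) := by exact_mod_cast hm1
      have hD : L / (2*w) = 1.5 * u ^ ((4:ℝ)/15) := by
        have hsp : u ^ ((2:ℝ)/3) / u ^ ((2:ℝ)/5) = u ^ ((4:ℝ)/15) := by
          rw [← Real.rpow_sub hu0]
          norm_num
        rw [hL_def, hw_def, ← hsp]
        field_simp
        ring
      rw [← hD]
      apply card_le_of_close _ _ (by positivity)
      intro a haS b hbS hab
      simp only [Finset.mem_filter] at haS hbS
      have h1 := (hA _).mp haS.2
      have h2 := (hA _).mp hbS.2
      have hwa : w ≤ (a:ℝ) := hQ2w a haS.1.1 haS.1.2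
      have hwb : w ≤ (b:ℝ) := hQ2w b hbS.1.1 hbS.1.2
      have habR : (a:ℝ) ≤ (b:ℝ) := by exact_mod_cast hab
      have hc1 : u < ((a:ℕ):ℝ)^2 * (m:ℝ) := by
        have := h1.1
        push_cast at this ⊢
        nlinarith [this]
      have hc2 : ((b:ℕ):ℝ)^2 * (m:ℝ) < u + L := by
        have := h2.2
        push_cast at this ⊢
        nlinarith [this]
      rw [le_div_iff₀ (by positivity)]
      nlinarith [mul_nonneg (sub_nonneg.mpr habR) (by linarith : (0:ℝ) ≤ (b:ℝ) + (a:ℝ) - 2*w),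
        mul_nonneg (by nlinarith : (0:ℝ) ≤ ((b:ℝ)^2 - (a:ℝ)^2)) (by linarith : (0:ℝ) ≤ (m:ℝ) - 1)]
    calc ∑ q ∈ Q.filter (fun q => ¬ q < T), ((A.filter (fun a => (q:ℤ)^2 ∣ a)).card : ℝ)
        ≤ ∑ q ∈ Q.filter (fun q => ¬ q < T),
            ((((Finset.Icc (1:ℤ) M).filter (fun m => (q:ℤ)^2 * m ∈ A)).card : ℝ)) :=
          Finset.sum_le_sum hstepA
      _ = ∑ m ∈ Finset.Icc (1:ℤ) M,
            (((Q.filter (fun q => ¬ q < T)).filter (fun q : ℕ => ((q:ℤ))^2 * m ∈ A)).card : ℝ) := hswap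
      _ ≤ ∑ m ∈ Finset.Icc (1:ℤ) M, (1.5 * u ^ ((4:ℝ)/15) + 1) := Finset.sum_le_sum hstepC
      _ = ((Finset.Icc (1:ℤ) M).card : ℝ) * (1.5 * u ^ ((4:ℝ)/15) + 1) := by
          rw [Finset.sum_const, nsmul_eq_mul]
      _ ≤ (2 * u ^ ((1:ℝ)/5) + 1) * (1.5 * u ^ ((4:ℝ)/15) + 1) := by
          apply mul_le_mul_of_nonneg_right _ (by positivity)
          rw [Int.card_Icc, show M + 1 - 1 = M from by ring]
          rw [show ((M.toNat:ℕ):ℝ) = (M:ℝ) from by exact_mod_cast Int.toNat_of_nonneg hM0]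
          exact hM_ub
  -- assemble
  have hsplit := Finset.sum_filter_add_sum_filter_not Q (fun q => q < T)
      (fun q => ((A.filter (fun a => (q:ℤ)^2 ∣ a)).card : ℝ))
  have hcardA : 2 * u ^ ((2:ℝ)/3) ≤ (A.card : ℝ) := by
    have hk0 : (0:ℤ) ≤ ⌈L⌉ - 1 := by
      have h := Int.ceil_pos.mpr hL0
      omega
    have hsub : Finset.Icc (N+1) (N + (⌈L⌉ - 1)) ⊆ A := by
      intro a ha
      rw [Finset.mem_Icc] at ha
      rw [hA]
      have hceil2 : (⌈L⌉:ℝ) < L + 1 := Int.ceil_lt_add_one L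
      constructor
      · have h : N < a := by omega
        have hRR : (N:ℝ) < (a:ℝ) := by exact_mod_cast h
        linarith [hu_def]
      · have hcast2 : (a:ℝ) ≤ (N:ℝ) + ((⌈L⌉:ℝ) - 1) := by
          have h := ha.2
          have h' : ((a:ℤ):ℝ) ≤ ((N + (⌈L⌉ - 1) : ℤ):ℝ) := by exact_mod_cast h
          push_cast at h'
          linarith
        linarith [hu_def]
    have hcle := Finset.card_le_card hsub
    rw [Int.card_Icc] at hcle
    have hid : N + (⌈L⌉ - 1) + 1 - (N+1) = ⌈L⌉ - 1 := by ring
    rw [hid] at hcle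
    have e := Int.toNat_of_nonneg hk0
    have hcast : (((⌈L⌉ - 1).toNat : ℕ) : ℝ) = ((⌈L⌉:ℝ) - 1) := by
      exact_mod_cast congrArg (fun t : ℤ => (t:ℝ)) e
    have hceil : L ≤ (⌈L⌉:ℝ) := Int.le_ceil L
    have hcard : ((⌈L⌉:ℝ) - 1) ≤ (A.card : ℝ) := by
      rw [← hcast]
      exact_mod_cast hcle
    have hfin : 2 * u ^ ((2:ℝ)/3) ≤ L - 1 := by
      rw [hL_def]
      nlinarith [h23]
    linarith
  have hRHS : 0.03 * u ^ ((41:ℝ)/75) ≤ 0.03 * (A.card:ℝ) ^ (0.82:ℝ) := by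
    apply mul_le_mul_of_nonneg_left _ (by norm_num)
    calc u ^ ((41:ℝ)/75) = (u ^ ((2:ℝ)/3)) ^ (0.82:ℝ) := by
          rw [← Real.rpow_mul hu0.le]; norm_num
      _ ≤ ((A.card:ℝ)) ^ (0.82:ℝ) := by
          apply Real.rpow_le_rpow (by positivity) _ (by norm_num)
          nlinarith [hupos ((2:ℝ)/3)]
  have h1000 : (1000:ℝ) ≤ u ^ ((2:ℝ)/25) := by
    have h := hu_rpow_ge (2/25) (by norm_num)
    have h2 : (10:ℝ) ^ ((3:ℝ)) ≤ (10:ℝ) ^ ((40:ℝ)*(2/25)) :=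
      Real.rpow_le_rpow_of_exponent_le (by norm_num) (by norm_num)
    have h3 : (10:ℝ) ^ ((3:ℝ)) = 1000 := by
      rw [show (3:ℝ) = ((3:ℕ):ℝ) by norm_num, Real.rpow_natCast]
      norm_num
    linarith
  -- power comparisons
  have e715 := fun (p : ℝ) (hp : p ≤ 7/15) => humono p (7/15) hp
  have hone : (1:ℝ) ≤ u ^ ((7:ℝ)/15) := by
    have := humono 0 (7/15) (by norm_num)
    rwa [Real.rpow_zero] at this
  have hmul1 : u ^ ((1:ℝ)/5) * u ^ ((4:ℝ)/15) = u ^ ((7:ℝ)/15) := by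
    rw [← Real.rpow_add hu0]; norm_num
  have hmul2 : u ^ ((7:ℝ)/15) * u ^ ((2:ℝ)/25) = u ^ ((41:ℝ)/75) := by
    rw [← Real.rpow_add hu0]; norm_num
  have htotal : ∑ q ∈ Q, ((A.filter (fun a => (q:ℤ)^2 ∣ a)).card : ℝ) ≤ 16 * u ^ ((7:ℝ)/15) := by
    rw [← hsplit]
    have h25 : w ≤ u ^ ((7:ℝ)/15) := by rw [hw_def]; exact e715 (2/5) (by norm_num)
    have h15' := e715 (1/5) (by norm_num)
    have h415 := e715 (4/15) (by norm_num)
    have hexp : (2 * u ^ ((1:ℝ)/5) + 1) * (1.5 * u ^ ((4:ℝ)/15) + 1) =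
        3*(u ^ ((1:ℝ)/5) * u ^ ((4:ℝ)/15)) + 2*u ^ ((1:ℝ)/5) + 1.5*u ^ ((4:ℝ)/15) + 1 := by
      ring
    rw [hmul1] at hexp
    linarith [hpart1, hpart2]
  calc ∑ q ∈ Q, ((A.filter (fun a => (q:ℤ)^2 ∣ a)).card : ℝ)
      ≤ 16 * u ^ ((7:ℝ)/15) := htotal
    _ ≤ 0.03 * u ^ ((41:ℝ)/75) := by
        rw [← hmul2]
        have he := hupos ((7:ℝ)/15)
        nlinarith [mul_le_mul_of_nonneg_left h1000 he.le]
    _ ≤ 0.03 * (A.card:ℝ) ^ (0.82:ℝ) := hRHS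
end

section
/- For every a ∈ A' with gcd(a, P(z)) = 1, Richert's weight satisfies w(a) ≤ λ − Ω(a) + k₂·(log a)/(log X), where Ω counts prime factors with multiplicity. -/
open Real Finset

open Classical in
theorem richert_weight_pointwise_bound
    (A : Finset ℕ) (hApos : ∀ a ∈ A, 0 < a) (hne : A.Nonempty)
    (P : Set ℕ) (hP : P = {p : ℕ | Nat.Prime p})
    (k₁ k₂ : ℝ) (hk₂ : 1 ≤ k₂) (hk₁₂ : k₂ ≤ k₁)
    (X z y lam : ℝ)
    (hX : X = (A.max' hne : ℝ))
    (hz : z = X ^ (1 / k₁)) (hy : y = X ^ (1 / k₂))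
    (w : ℕ → ℝ)
    (hw : ∀ b : ℕ, w b = lam -
      ∑ p ∈ b.primeFactors.filter (fun p => p ∈ P ∧ z ≤ (p : ℝ) ∧ (p : ℝ) < y),
        (1 - Real.log p / Real.log y))
    (a : ℕ) (haA : a ∈ A)
    (hsq : ∀ p : ℕ, Nat.Prime p → p ∈ P → z ≤ (p : ℝ) → (p : ℝ) < y → ¬ p ^ 2 ∣ a)
    (hcop : ∀ p : ℕ, Nat.Prime p → p ∈ P → (p : ℝ) < z → ¬ p ∣ a) :
    w a ≤ lam - (a.primeFactorsList.length : ℝ) +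
      k₂ * Real.log a / Real.log X := by
  have ha0 : 0 < a := hApos a haA
  rcases eq_or_lt_of_le (Nat.succ_le_of_lt ha0) with h1 | h2
  · -- a = 1
    have ha1 : a = 1 := h1.symm
    subst ha1
    simp [hw 1]
  -- now 2 ≤ a
  have ha2 : 2 ≤ a := h2
  have hXa : (a : ℝ) ≤ X := by
    rw [hX]; exact_mod_cast A.le_max' a haA
  have hX1 : (1 : ℝ) < X := lt_of_lt_of_le (by exact_mod_cast ha2) hXa
  have hX0 : (0 : ℝ) < X := by linarith
  have hlogX : 0 < Real.log X := Real.log_pos hX1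
  have hk2 : (0 : ℝ) < k₂ := by linarith
  have hlogy : Real.log y = Real.log X / k₂ := by
    rw [hy, Real.log_rpow hX0]; ring
  have hlogy0 : 0 < Real.log y := by rw [hlogy]; positivity
  have hy0 : (0 : ℝ) < y := by
    rw [hy]; positivity
  -- set of "middle" primes
  set S := a.primeFactors.filter (fun p => p ∈ P ∧ z ≤ (p : ℝ) ∧ (p : ℝ) < y) with hS
  -- every prime factor of a is ≥ z
  have hzle : ∀ p ∈ a.primeFactors, z ≤ (p : ℝ) := by
    intro p hp
    have hpp : p.Prime := Nat.prime_of_mem_primeFactors hp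
    have hpd : p ∣ a := Nat.dvd_of_mem_primeFactors hp
    by_contra hlt
    exact hcop p hpp (by rw [hP]; exact hpp) (lt_of_not_ge hlt) hpd
  -- primes in S have factorization 1
  have hfacS : ∀ p ∈ S, a.factorization p = 1 := by
    intro p hp
    rw [hS, Finset.mem_filter] at hp
    obtain ⟨hpf, hpP, hpz, hpy⟩ := hp
    have hpp : p.Prime := Nat.prime_of_mem_primeFactors hpf
    have h1 : 1 ≤ a.factorization p := by
      rw [← hpp.pow_dvd_iff_le_factorization (by omega)]
      simpa using Nat.dvd_of_mem_primeFactors hpf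
    have h2 : ¬ 2 ≤ a.factorization p := by
      rw [← hpp.pow_dvd_iff_le_factorization (by omega)]
      exact hsq p hpp hpP hpz hpy
    omega
  -- primes not in S (but dividing a) are ≥ y
  have hyle : ∀ p ∈ a.primeFactors, p ∉ S → y ≤ (p : ℝ) := by
    intro p hp hns
    by_contra hlt
    push_neg at hlt
    exact hns (Finset.mem_filter.mpr ⟨hp, by
      rw [hP]; exact Nat.prime_of_mem_primeFactors hp, hzle p hp, hlt⟩)
  -- Ω(a) as a sum
  have hOmega : (a.primeFactorsList.length : ℕ) =
      ∑ p ∈ a.primeFactors, a.factorization p := by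
    rw [← Nat.toFinset_factors]
    rw [← List.sum_toFinset_count_eq_length]
    exact Finset.sum_congr rfl fun p _ => Nat.primeFactorsList_count_eq
  -- log a as a sum
  have hloga : Real.log a = ∑ p ∈ a.primeFactors,
      (a.factorization p : ℝ) * Real.log p := by
    rw [Real.log_nat_eq_sum_factorization]
    rfl
  -- split sums over S and complement
  have hsplitΩ : (∑ p ∈ a.primeFactors, (a.factorization p : ℝ)) =
      (S.card : ℝ) + ∑ p ∈ a.primeFactors.filter
        (fun p => ¬(p ∈ P ∧ z ≤ (p : ℝ) ∧ (p : ℝ) < y)), (a.factorization p : ℝ) := by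
    rw [← Finset.sum_filter_add_sum_filter_not a.primeFactors
      (fun p => p ∈ P ∧ z ≤ (p : ℝ) ∧ (p : ℝ) < y)]
    congr 1
    rw [Finset.card_eq_sum_ones S, Nat.cast_sum]
    exact Finset.sum_congr rfl fun p hp => by rw [hfacS p hp]
  have hsplitlog : Real.log a = (∑ p ∈ S, Real.log p) +
      ∑ p ∈ a.primeFactors.filter
        (fun p => ¬(p ∈ P ∧ z ≤ (p : ℝ) ∧ (p : ℝ) < y)),
        (a.factorization p : ℝ) * Real.log p := by
    rw [hloga, ← Finset.sum_filter_add_sum_filter_not a.primeFactors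
      (fun p => p ∈ P ∧ z ≤ (p : ℝ) ∧ (p : ℝ) < y)]
    congr 1
    exact Finset.sum_congr rfl fun p hp => by rw [hfacS p hp]; norm_num
  -- key estimate on the complement
  have hkey : (∑ p ∈ a.primeFactors.filter
      (fun p => ¬(p ∈ P ∧ z ≤ (p : ℝ) ∧ (p : ℝ) < y)), (a.factorization p : ℝ)) * Real.log y ≤
      ∑ p ∈ a.primeFactors.filter
        (fun p => ¬(p ∈ P ∧ z ≤ (p : ℝ) ∧ (p : ℝ) < y)),
        (a.factorization p : ℝ) * Real.log p := by
    rw [Finset.sum_mul]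
    apply Finset.sum_le_sum
    intro p hp
    rw [Finset.mem_filter] at hp
    have hpy : y ≤ (p : ℝ) := hyle p hp.1 (by
      rw [hS, Finset.mem_filter]; exact fun h => hp.2 h.2)
    have : Real.log y ≤ Real.log p := Real.log_le_log hy0 hpy
    have hfp : (0 : ℝ) ≤ (a.factorization p : ℝ) := by positivity
    exact mul_le_mul_of_nonneg_left this hfp
  -- rewrite the weight and the goal
  rw [hw a]
  have hsum : ∑ p ∈ S, (1 - Real.log p / Real.log y) =
      (S.card : ℝ) - (∑ p ∈ S, Real.log p) / Real.log y := by
    rw [Finset.sum_sub_distrib, Finset.sum_const, Finset.sum_div]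
    simp
  rw [hsum]
  have hrw : k₂ * Real.log a / Real.log X = Real.log a / Real.log y := by
    rw [hlogy]
    field_simp
  rw [hrw]
  have hΩR : (a.primeFactorsList.length : ℝ) =
      ∑ p ∈ a.primeFactors, (a.factorization p : ℝ) := by
    rw [hOmega]; push_cast; ring
  rw [hΩR, hsplitΩ]
  -- remaining: algebra
  set T := ∑ p ∈ a.primeFactors.filter
    (fun p => ¬(p ∈ P ∧ z ≤ (p : ℝ) ∧ (p : ℝ) < y)), (a.factorization p : ℝ) with hT
  set TL := ∑ p ∈ a.primeFactors.filter
    (fun p => ¬(p ∈ P ∧ z ≤ (p : ℝ) ∧ (p : ℝ) < y)),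
    (a.factorization p : ℝ) * Real.log p with hTL
  have h1 : T * Real.log y ≤ TL := hkey
  have h2 : Real.log a = (∑ p ∈ S, Real.log p) + TL := hsplitlog
  have h3 : T ≤ (Real.log a - ∑ p ∈ S, Real.log p) / Real.log y := by
    rw [le_div_iff₀ hlogy0]
    linarith
  have h4 : (Real.log a - ∑ p ∈ S, Real.log p) / Real.log y =
      Real.log a / Real.log y - (∑ p ∈ S, Real.log p) / Real.log y := by
    ring
  linarith [h3, h4.le]
end
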